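/- arXiv:2203.00264 — 2 statements merged into one kernel-verified Lean document; each statement's English description precedes it below -/
import Mathlib

section
/- For α > 0 and y > 0, the double sum Σ_{(n,m)∈ℤ²} n² e^{−πα(yn² + (m+n/2)²/y)} equals J₁ + J₂ where J₁ = 8Σ_{n=1}^∞ n² e^{−4παyn²} · (1 + 2Σ_{m=1}^∞ e^{−παm²/y}) and J₂ = 4Σ_{n=1}^∞ (2n−1)² e^{−παy(2n−1)²} · Σ_{m=1}^∞ e^{−πα(2m−1)²/(4y)}. Consequently it is bounded above by 4e^{−πα(y+1/(4y))}·(1 + ε_a) where ε_a = ε_{a,1} + ε_{a,2} + ε_{a,1}ε_{a,2} + ε_{a,4} with ε_{a,1} = Σ_{n=2}^∞ (2n−1)² e^{−παy((2n−1)²−1)}, ε_{a,2} = Σ_{n=2}^∞ e^{−(πα/(4y))((2n−1)²−1)}, and ε_{a,4} = 2e^{−πα(3y−1/(4y))}(1 + Σ_{n=2}^∞ n² e^{−4παy(n²−1)})·ϑ₃(α/y). -/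
open Real

/-- `ϑ₃(X) = 1 + 2Σ_{k=1}^∞ e^{−πk²X}`. -/
noncomputable def theta3 (X : ℝ) : ℝ :=
  1 + 2 * ∑' k : ℕ, Real.exp (-π * ((k : ℝ) + 1) ^ 2 * X)

/-- `ε_{a,1} = Σ_{n=2}^∞ (2n−1)² e^{−παy((2n−1)²−1)}`. -/
noncomputable def epsA1 (α y : ℝ) : ℝ :=
  ∑' n : ℕ, (2 * (n : ℝ) + 3) ^ 2 * Real.exp (-π * α * y * ((2 * (n : ℝ) + 3) ^ 2 - 1))

/-- `ε_{a,2} = Σ_{n=2}^∞ e^{−(πα/(4y))((2n−1)²−1)}`. -/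
noncomputable def epsA2 (α y : ℝ) : ℝ :=
  ∑' n : ℕ, Real.exp (-(π * α / (4 * y)) * ((2 * (n : ℝ) + 3) ^ 2 - 1))

/-- `ε_{a,4} = 2e^{−πα(3y−1/(4y))}(1 + Σ_{n=2}^∞ n² e^{−4παy(n²−1)})·ϑ₃(α/y)`. -/
noncomputable def epsA4 (α y : ℝ) : ℝ :=
  2 * Real.exp (-π * α * (3 * y - 1 / (4 * y))) *
    (1 + ∑' n : ℕ, ((n : ℝ) + 2) ^ 2 * Real.exp (-4 * π * α * y * (((n : ℝ) + 2) ^ 2 - 1))) *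
    theta3 (α / y)

/-- `ε_a = ε_{a,1} + ε_{a,2} + ε_{a,1}ε_{a,2} + ε_{a,4}`. -/
noncomputable def epsA (α y : ℝ) : ℝ :=
  epsA1 α y + epsA2 α y + epsA1 α y * epsA2 α y + epsA4 α y

section helpers

lemma summable_exp_shift {c : ℝ} (hc : 0 < c) (s : ℝ) :
    Summable fun n : ℕ => Real.exp (-c * ((n : ℝ) + s) ^ 2) := by
  apply Summable.of_norm_bounded_eventually_nat (g := fun n => (Real.exp (-c / 4)) ^ n)
  · exact summable_geometric_of_lt_one (exp_pos _).le (exp_lt_one_iff.mpr (by linarith))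
  · filter_upwards [Filter.eventually_ge_atTop ⌈2 * |s|⌉₊] with n hn
    have h1 : 2 * |s| ≤ (n : ℝ) := Nat.ceil_le.mp hn
    have h2 : (n : ℝ) / 2 ≤ (n : ℝ) + s := by
      have := neg_abs_le s; linarith
    have h3 : (0:ℝ) ≤ (n : ℝ) / 2 := by positivity
    have h4 : ((n:ℝ)/2) ^ 2 ≤ ((n:ℝ) + s) ^ 2 := by nlinarith
    have h5 : (n : ℝ) ≤ (n : ℝ) ^ 2 := by
      have := Nat.le_self_pow (two_ne_zero) n
      exact_mod_cast this
    rw [norm_of_nonneg (exp_pos _).le, ← Real.exp_nat_mul, exp_le_exp]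
    nlinarith

lemma summable_sq_exp {c : ℝ} (hc : 0 < c) :
    Summable fun n : ℕ => (n : ℝ) ^ 2 * Real.exp (-c * (n : ℝ) ^ 2) := by
  refine Summable.of_nonneg_of_le (fun n => by positivity) (fun n => ?_)
    (summable_pow_mul_geometric_of_norm_lt_one 2 (r := Real.exp (-c))
      (by rw [norm_of_nonneg (exp_pos _).le]; exact exp_lt_one_iff.mpr (by linarith)))
  · 
    have h5 : (n : ℝ) ≤ (n : ℝ) ^ 2 := by
      have := Nat.le_self_pow (two_ne_zero) n
      exact_mod_cast this
    rw [← Real.exp_nat_mul]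
    have : Real.exp (-c * (n:ℝ)^2) ≤ Real.exp ((n:ℝ) * -c) := by
      rw [exp_le_exp]; nlinarith
    exact mul_le_mul_of_nonneg_left this (by positivity)

lemma summable_exp_sq {c : ℝ} (hc : 0 < c) :
    Summable fun n : ℕ => Real.exp (-c * (n : ℝ) ^ 2) := by
  simpa using summable_exp_shift hc 0

/-- summability over ℤ of the shifted Gaussian. -/
lemma summable_exp_shift_int {c : ℝ} (hc : 0 < c) (s : ℝ) :
    Summable fun m : ℤ => Real.exp (-c * ((m : ℝ) + s) ^ 2) := by
  apply Summable.of_nat_of_neg_add_one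
  · exact_mod_cast summable_exp_shift hc s
  · refine (summable_exp_shift hc (1 - s)).congr fun n => ?_
    push_cast
    ring_nf

lemma summable_sq_exp_int {c : ℝ} (hc : 0 < c) :
    Summable fun m : ℤ => (m : ℝ) ^ 2 * Real.exp (-c * (m : ℝ) ^ 2) := by
  apply Summable.of_nat_of_neg_add_one
  · exact_mod_cast summable_sq_exp hc
  · refine ((summable_sq_exp hc).comp_injective
      (i := fun n : ℕ => n + 1) (fun a b h => by simpa using h)).congr fun n => ?_
    simp only [Function.comp]
    push_cast
    ring_nf

lemma tsum_int_shift {c : ℝ} (s : ℝ) (k : ℤ) :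
    ∑' m : ℤ, Real.exp (-c * (((m : ℝ) + (k : ℝ)) + s) ^ 2)
      = ∑' m : ℤ, Real.exp (-c * ((m : ℝ) + s) ^ 2) := by
  rw [← (Equiv.addRight k).tsum_eq (fun m : ℤ => Real.exp (-c * ((m : ℝ) + s) ^ 2))]
  refine tsum_congr fun m => ?_
  simp only [Equiv.coe_addRight]
  push_cast
  ring_nf

lemma tsum_int_zero {c : ℝ} (hc : 0 < c) :
    ∑' m : ℤ, Real.exp (-c * (m : ℝ) ^ 2)
      = 1 + 2 * ∑' n : ℕ, Real.exp (-c * ((n : ℝ) + 1) ^ 2) := by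
  have h1 : Summable fun n : ℕ => Real.exp (-c * ((n : ℕ) : ℝ) ^ 2) := summable_exp_sq hc
  rw [tsum_of_nat_of_neg_add_one (by exact_mod_cast h1) (by
      refine ((summable_exp_shift hc 1)).congr fun n => ?_; push_cast; ring_nf)]
  have eA : ∑' n : ℕ, Real.exp (-c * ((n : ℤ) : ℝ) ^ 2)
      = 1 + ∑' n : ℕ, Real.exp (-c * ((n : ℝ) + 1) ^ 2) := by
    rw [Summable.tsum_eq_zero_add (by exact_mod_cast h1)]
    congr 1
    · norm_num
    · exact tsum_congr fun n => by push_cast; ring_nf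
  have eB : ∑' n : ℕ, Real.exp (-c * ((-((n : ℕ) + 1) : ℤ) : ℝ) ^ 2)
      = ∑' n : ℕ, Real.exp (-c * ((n : ℝ) + 1) ^ 2) := by
    exact tsum_congr fun n => by push_cast; ring_nf
  rw [eA, eB]
  ring

lemma tsum_int_half {c : ℝ} (hc : 0 < c) :
    ∑' m : ℤ, Real.exp (-c * ((m : ℝ) + 1/2) ^ 2)
      = 2 * ∑' n : ℕ, Real.exp (-c * ((n : ℝ) + 1/2) ^ 2) := by
  have h1 : Summable fun n : ℕ => Real.exp (-c * ((n : ℝ) + 1/2) ^ 2) :=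
    summable_exp_shift hc (1/2)
  rw [tsum_of_nat_of_neg_add_one (by exact_mod_cast h1) (by
      refine h1.congr fun n => ?_; push_cast; ring_nf)]
  have eA : ∑' n : ℕ, Real.exp (-c * ((((n : ℕ) : ℤ) : ℝ) + 1/2) ^ 2)
      = ∑' n : ℕ, Real.exp (-c * ((n : ℝ) + 1/2) ^ 2) := by
    exact tsum_congr fun n => by push_cast; ring_nf
  have eB : ∑' n : ℕ, Real.exp (-c * (((-((n : ℕ) + 1) : ℤ) : ℝ) + 1/2) ^ 2)
      = ∑' n : ℕ, Real.exp (-c * ((n : ℝ) + 1/2) ^ 2) := by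
    exact tsum_congr fun n => by push_cast; ring_nf
  rw [eA, eB]
  ring

lemma S_val {c : ℝ} (n : ℤ) :
    ∑' m : ℤ, Real.exp (-c * ((m : ℝ) + (n : ℝ) / 2) ^ 2)
      = if Even n then ∑' m : ℤ, Real.exp (-c * (m : ℝ) ^ 2)
        else ∑' m : ℤ, Real.exp (-c * ((m : ℝ) + 1/2) ^ 2) := by
  rcases Int.even_or_odd n with ⟨k, hk⟩ | ⟨k, hk⟩
  · rw [if_pos ⟨k, hk⟩, hk]
    have e1 : ∑' m : ℤ, Real.exp (-c * ((m : ℝ) + ((k + k : ℤ) : ℝ) / 2) ^ 2)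
        = ∑' m : ℤ, Real.exp (-c * (((m : ℝ) + (k : ℝ)) + 0) ^ 2) := by
      refine tsum_congr fun m => ?_; push_cast; ring_nf
    rw [e1, tsum_int_shift 0 k]
    refine tsum_congr fun m => ?_; ring_nf
  · rw [if_neg (by simpa [hk] using (Int.even_add_one.mpr (by simp [Int.even_mul]))), hk]
    have e1 : ∑' m : ℤ, Real.exp (-c * ((m : ℝ) + ((2 * k + 1 : ℤ) : ℝ) / 2) ^ 2)
        = ∑' m : ℤ, Real.exp (-c * (((m : ℝ) + (k : ℝ)) + 1/2) ^ 2) := by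
      refine tsum_congr fun m => ?_; push_cast; ring_nf
    rw [e1, tsum_int_shift (1/2) k]

lemma split_eq (α y : ℝ) (hα : 0 < α) (hy : 0 < y) :
    (∑' p : ℤ × ℤ,
        (p.1 : ℝ) ^ 2 *
          Real.exp (-π * α * (y * (p.1 : ℝ) ^ 2 + ((p.2 : ℝ) + (p.1 : ℝ) / 2) ^ 2 / y))
      = 8 * (∑' n : ℕ, ((n : ℝ) + 1) ^ 2 * Real.exp (-4 * π * α * y * ((n : ℝ) + 1) ^ 2)) *
            (1 + 2 * ∑' m : ℕ, Real.exp (-π * α * ((m : ℝ) + 1) ^ 2 / y))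
        + 4 * (∑' n : ℕ, (2 * (n : ℝ) + 1) ^ 2 * Real.exp (-π * α * y * (2 * (n : ℝ) + 1) ^ 2)) *
            (∑' m : ℕ, Real.exp (-π * α * (2 * (m : ℝ) + 1) ^ 2 / (4 * y)))) := by
  have ht1 : 0 < π * α * y := by positivity
  have ht2 : 0 < π * α / y := by positivity
  obtain ⟨T0, hT0d⟩ : ∃ T0 : ℝ, T0 = ∑' m : ℤ, Real.exp (-(π * α / y) * (m : ℝ) ^ 2) := ⟨_, rfl⟩
  obtain ⟨T1, hT1d⟩ : ∃ T1 : ℝ,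
      T1 = ∑' m : ℤ, Real.exp (-(π * α / y) * ((m : ℝ) + 1/2) ^ 2) := ⟨_, rfl⟩
  have hT0nn : 0 ≤ T0 := hT0d ▸ tsum_nonneg fun _ => (exp_pos _).le
  have hT1nn : 0 ≤ T1 := hT1d ▸ tsum_nonneg fun _ => (exp_pos _).le
  obtain ⟨f, hfd⟩ : ∃ f : ℤ × ℤ → ℝ, f = fun p : ℤ × ℤ =>
      (p.1 : ℝ) ^ 2 *
        Real.exp (-π * α * (y * (p.1 : ℝ) ^ 2 + ((p.2 : ℝ) + (p.1 : ℝ) / 2) ^ 2 / y)) := ⟨_, rfl⟩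
  obtain ⟨G, hGd⟩ : ∃ G : ℤ → ℝ, G = fun n : ℤ =>
      (n : ℝ) ^ 2 * Real.exp (-(π * α * y) * (n : ℝ) ^ 2) * (if Even n then T0 else T1) := ⟨_, rfl⟩
  -- pointwise factorization
  have hpt : ∀ p : ℤ × ℤ, f p
      = (p.1 : ℝ) ^ 2 * Real.exp (-(π * α * y) * (p.1 : ℝ) ^ 2)
        * Real.exp (-(π * α / y) * ((p.2 : ℝ) + (p.1 : ℝ) / 2) ^ 2) := by
    intro p
    rw [hfd, mul_assoc, ← Real.exp_add]
    ring_nf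
  -- rows
  have hrow : ∀ n : ℤ, Summable fun m : ℤ => f (n, m) := by
    intro n
    refine ((summable_exp_shift_int ht2 ((n : ℝ)/2)).mul_left
      ((n : ℝ) ^ 2 * Real.exp (-(π * α * y) * (n : ℝ) ^ 2))).congr fun m => ?_
    rw [hpt (n, m), mul_assoc]
  -- row sums
  have hrowsum : ∀ n : ℤ, ∑' m : ℤ, f (n, m) = G n := by
    intro n
    calc ∑' m : ℤ, f (n, m)
        = ∑' m : ℤ, ((n : ℝ) ^ 2 * Real.exp (-(π * α * y) * (n : ℝ) ^ 2))
            * Real.exp (-(π * α / y) * ((m : ℝ) + (n : ℝ) / 2) ^ 2) := by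
          refine tsum_congr fun m => ?_
          rw [hpt (n, m), mul_assoc]
      _ = ((n : ℝ) ^ 2 * Real.exp (-(π * α * y) * (n : ℝ) ^ 2))
            * ∑' m : ℤ, Real.exp (-(π * α / y) * ((m : ℝ) + (n : ℝ) / 2) ^ 2) := tsum_mul_left
      _ = G n := by rw [S_val n, hGd, ← hT0d, ← hT1d]
  -- summability of G
  have hGsum : Summable G := by
    refine Summable.of_nonneg_of_le (fun n => ?_) (fun n => ?_)
      ((summable_sq_exp_int ht1).mul_right (T0 + T1))
    · rw [hGd]
      rcases em (Even n) with h | h <;> simp [h] <;> positivity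
    · rw [hGd]
      have hA : 0 ≤ (n : ℝ) ^ 2 * Real.exp (-(π * α * y) * (n : ℝ) ^ 2) := by positivity
      rcases em (Even n) with h | h <;> simp only [h, if_true, if_false] <;>
        nlinarith [mul_nonneg hA hT0nn, mul_nonneg hA hT1nn]
  -- summability of f
  have hf : Summable f := by
    rw [summable_prod_of_nonneg (fun p => by rw [hfd]; positivity)]
    exact ⟨hrow, by refine hGsum.congr fun n => ?_; exact (hrowsum n).symm⟩
  -- symmetry of G
  have hGeven : ∀ z : ℤ, G (-z) = G z := by
    intro z
    rw [hGd]
    simp [Int.cast_neg, neg_sq, even_neg]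
  have hGnat : Summable fun n : ℕ => G (n : ℤ) :=
    hGsum.comp_injective (fun a b h => by exact_mod_cast h)
  have hGneg : Summable fun n : ℕ => G (-((n : ℤ) + 1)) :=
    hGsum.comp_injective (fun a b h => by simp only [neg_inj, add_left_inj, Int.natCast_inj] at h; exact h)
  have he : Summable fun k : ℕ => G ((2 * k : ℕ) + 1 : ℤ) :=
    hGsum.comp_injective (i := fun k : ℕ => ((2 * k : ℕ) : ℤ) + 1)
      (fun a b h => by simp only [add_left_inj, Int.natCast_inj] at h; omega)
  have ho : Summable fun k : ℕ => G ((2 * k + 1 : ℕ) + 1 : ℤ) :=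
    hGsum.comp_injective (i := fun k : ℕ => ((2 * k + 1 : ℕ) : ℤ) + 1)
      (fun a b h => by simp only [add_left_inj, Int.natCast_inj] at h; omega)
  have hzero : ∑' n : ℕ, G (n : ℤ) = ∑' n : ℕ, G ((n : ℤ) + 1) := by
    rw [Summable.tsum_eq_zero_add hGnat]
    have h0 : G ((0 : ℕ) : ℤ) = 0 := by rw [hGd]; simp
    rw [h0, zero_add]
    exact tsum_congr fun n => by push_cast; ring_nf
  have hneg : ∑' n : ℕ, G (-((n : ℤ) + 1)) = ∑' n : ℕ, G ((n : ℤ) + 1) :=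
    tsum_congr fun n => hGeven _
  have hsplit : ∑' n : ℤ, G n = 2 * ∑' n : ℕ, G ((n : ℤ) + 1) := by
    rw [tsum_of_nat_of_neg_add_one hGnat (by exact_mod_cast hGneg)]
    push_cast
    rw [hzero, hneg]
    ring
  have heo : ∑' n : ℕ, G ((n : ℤ) + 1)
      = (∑' k : ℕ, G ((2 * k : ℕ) + 1 : ℤ)) + ∑' k : ℕ, G ((2 * k + 1 : ℕ) + 1 : ℤ) := by
    rw [← tsum_even_add_odd (f := fun n : ℕ => G ((n : ℤ) + 1))
      (he.congr fun k => by push_cast; ring_nf) (ho.congr fun k => by push_cast; ring_nf)]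
  have hodd : ∑' k : ℕ, G ((2 * k : ℕ) + 1 : ℤ)
      = (∑' n : ℕ, (2 * (n : ℝ) + 1) ^ 2 * Real.exp (-π * α * y * (2 * (n : ℝ) + 1) ^ 2)) * T1 := by
    rw [← tsum_mul_right]
    refine tsum_congr fun k => ?_
    rw [hGd]
    have hpar : ¬ Even (((2 * k : ℕ) : ℤ) + 1) := by
      simp [Int.even_add_one, Int.even_mul]
    simp only [hpar, if_false]
    push_cast
    ring_nf
  have heven : ∑' k : ℕ, G ((2 * k + 1 : ℕ) + 1 : ℤ)
      = (∑' n : ℕ, ((n : ℝ) + 1) ^ 2 * Real.exp (-4 * π * α * y * ((n : ℝ) + 1) ^ 2))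
          * (4 * T0) := by
    rw [← tsum_mul_right]
    refine tsum_congr fun k => ?_
    rw [hGd]
    have hpar : Even (((2 * k + 1 : ℕ) : ℤ) + 1) := ⟨k + 1, by push_cast; ring⟩
    simp only [hpar, if_true]
    push_cast
    ring_nf
  have hT0val : T0 = 1 + 2 * ∑' m : ℕ, Real.exp (-π * α * ((m : ℝ) + 1) ^ 2 / y) := by
    rw [hT0d, tsum_int_zero ht2]
    congr 2
    refine tsum_congr fun n => ?_
    congr 1
    ring
  have hT1val : T1 = 2 * ∑' m : ℕ, Real.exp (-π * α * (2 * (m : ℝ) + 1) ^ 2 / (4 * y)) := by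
    rw [hT1d, tsum_int_half ht2]
    congr 1
    refine tsum_congr fun n => ?_
    congr 1
    ring
  calc ∑' p : ℤ × ℤ,
        (p.1 : ℝ) ^ 2 *
          Real.exp (-π * α * (y * (p.1 : ℝ) ^ 2 + ((p.2 : ℝ) + (p.1 : ℝ) / 2) ^ 2 / y))
      = ∑' p : ℤ × ℤ, f p := by rw [hfd]
    _ = ∑' n : ℤ, ∑' m : ℤ, f (n, m) := Summable.tsum_prod' hf hrow
    _ = ∑' n : ℤ, G n := tsum_congr hrowsum
    _ = 2 * ∑' n : ℕ, G ((n : ℤ) + 1) := hsplit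
    _ = _ := by
        rw [heo, hodd, heven, hT0val, hT1val]
        ring

lemma bound_eq (α y : ℝ) (hα : 0 < α) (hy : 0 < y) :
    8 * (∑' n : ℕ, ((n : ℝ) + 1) ^ 2 * Real.exp (-4 * π * α * y * ((n : ℝ) + 1) ^ 2)) *
        (1 + 2 * ∑' m : ℕ, Real.exp (-π * α * ((m : ℝ) + 1) ^ 2 / y))
      + 4 * (∑' n : ℕ, (2 * (n : ℝ) + 1) ^ 2 * Real.exp (-π * α * y * (2 * (n : ℝ) + 1) ^ 2)) *
        (∑' m : ℕ, Real.exp (-π * α * (2 * (m : ℝ) + 1) ^ 2 / (4 * y)))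
      = 4 * Real.exp (-π * α * (y + 1 / (4 * y))) * (1 + epsA α y) := by
  have ht1 : 0 < π * α * y := by positivity
  have ht4 : 0 < 4 * (π * α * y) := by positivity
  have ht2 : 0 < π * α / (4 * y) := by positivity
  have F1 : (∑' n : ℕ, (2 * (n : ℝ) + 1) ^ 2 * Real.exp (-π * α * y * (2 * (n : ℝ) + 1) ^ 2))
      = Real.exp (-(π * α * y)) * (1 + epsA1 α y) := by
    have hs : Summable fun n : ℕ =>
        (2 * (n : ℝ) + 1) ^ 2 * Real.exp (-π * α * y * (2 * (n : ℝ) + 1) ^ 2) := by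
      refine ((summable_sq_exp ht1).comp_injective
        (i := fun n : ℕ => 2 * n + 1) (fun a b h => by simpa using h)).congr fun n => ?_
      simp only [Function.comp]
      push_cast
      ring_nf
    rw [Summable.tsum_eq_zero_add hs]
    have h0 : (2 * ((0:ℕ) : ℝ) + 1) ^ 2 * Real.exp (-π * α * y * (2 * ((0:ℕ) : ℝ) + 1) ^ 2)
        = Real.exp (-(π * α * y)) := by norm_num
    have h1 : ∑' n : ℕ, (2 * ((n + 1 : ℕ) : ℝ) + 1) ^ 2
          * Real.exp (-π * α * y * (2 * ((n + 1 : ℕ) : ℝ) + 1) ^ 2)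
        = Real.exp (-(π * α * y)) * epsA1 α y := by
      rw [epsA1, ← tsum_mul_left]
      refine tsum_congr fun n => ?_
      conv_rhs => rw [mul_left_comm, ← Real.exp_add]
      push_cast
      ring_nf
    rw [h0, h1]
    ring
  have F2 : (∑' m : ℕ, Real.exp (-π * α * (2 * (m : ℝ) + 1) ^ 2 / (4 * y)))
      = Real.exp (-(π * α / (4 * y))) * (1 + epsA2 α y) := by
    have hs : Summable fun m : ℕ => Real.exp (-π * α * (2 * (m : ℝ) + 1) ^ 2 / (4 * y)) := by
      refine ((summable_exp_sq ht2).comp_injective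
        (i := fun n : ℕ => 2 * n + 1) (fun a b h => by simpa using h)).congr fun n => ?_
      simp only [Function.comp]
      push_cast
      congr 1
      ring
    rw [Summable.tsum_eq_zero_add hs]
    have h0 : Real.exp (-π * α * (2 * ((0:ℕ) : ℝ) + 1) ^ 2 / (4 * y))
        = Real.exp (-(π * α / (4 * y))) := by
      push_cast
      rw [show -π * α * (2 * (0:ℝ) + 1) ^ 2 / (4 * y) = -(π * α / (4 * y)) by ring]
    have h1 : ∑' m : ℕ, Real.exp (-π * α * (2 * ((m + 1 : ℕ) : ℝ) + 1) ^ 2 / (4 * y))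
        = Real.exp (-(π * α / (4 * y))) * epsA2 α y := by
      rw [epsA2, ← tsum_mul_left]
      refine tsum_congr fun n => ?_
      rw [← Real.exp_add]
      push_cast
      congr 1
      field_simp
      ring
    rw [h0, h1]
    ring
  have F3 : (∑' n : ℕ, ((n : ℝ) + 1) ^ 2 * Real.exp (-4 * π * α * y * ((n : ℝ) + 1) ^ 2))
      = Real.exp (-(4 * (π * α * y))) *
        (1 + ∑' n : ℕ, ((n : ℝ) + 2) ^ 2
          * Real.exp (-4 * π * α * y * (((n : ℝ) + 2) ^ 2 - 1))) := by
    have hs : Summable fun n : ℕ =>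
        ((n : ℝ) + 1) ^ 2 * Real.exp (-4 * π * α * y * ((n : ℝ) + 1) ^ 2) := by
      refine ((summable_sq_exp ht4).comp_injective
        (i := fun n : ℕ => n + 1) (fun a b h => by simpa using h)).congr fun n => ?_
      simp only [Function.comp]
      push_cast
      ring_nf
    rw [Summable.tsum_eq_zero_add hs]
    have h0 : (((0:ℕ) : ℝ) + 1) ^ 2 * Real.exp (-4 * π * α * y * (((0:ℕ) : ℝ) + 1) ^ 2)
        = Real.exp (-(4 * (π * α * y))) := by
      push_cast
      rw [show -4 * π * α * y * ((0:ℝ) + 1) ^ 2 = -(4 * (π * α * y)) by ring]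
      norm_num
    have h1 : ∑' n : ℕ, (((n + 1 : ℕ) : ℝ) + 1) ^ 2
          * Real.exp (-4 * π * α * y * (((n + 1 : ℕ) : ℝ) + 1) ^ 2)
        = Real.exp (-(4 * (π * α * y))) * ∑' n : ℕ, ((n : ℝ) + 2) ^ 2
          * Real.exp (-4 * π * α * y * (((n : ℝ) + 2) ^ 2 - 1)) := by
      rw [← tsum_mul_left]
      refine tsum_congr fun n => ?_
      conv_rhs => rw [mul_left_comm, ← Real.exp_add]
      push_cast
      ring_nf
    rw [h0, h1]
    ring
  have F4 : (1 + 2 * ∑' m : ℕ, Real.exp (-π * α * ((m : ℝ) + 1) ^ 2 / y)) = theta3 (α / y) := by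
    rw [theta3]
    congr 2
    refine tsum_congr fun n => ?_
    congr 1
    ring
  have key1 : Real.exp (-(π * α * y)) * Real.exp (-(π * α / (4 * y)))
      = Real.exp (-π * α * (y + 1 / (4 * y))) := by
    rw [← Real.exp_add]
    congr 1
    ring
  have key2 : Real.exp (-π * α * (y + 1 / (4 * y))) * Real.exp (-π * α * (3 * y - 1 / (4 * y)))
      = Real.exp (-(4 * (π * α * y))) := by
    rw [← Real.exp_add]
    congr 1
    ring
  rw [F1, F2, F3, F4, epsA, epsA4]
  linear_combination (8 * (1 + ∑' n : ℕ, ((n : ℝ) + 2) ^ 2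
      * Real.exp (-4 * π * α * y * (((n : ℝ) + 2) ^ 2 - 1))) * theta3 (α / y)) * key2.symm
    + (4 * (1 + epsA1 α y) * (1 + epsA2 α y)) * key1

end helpers

theorem double_sum_n_sq_split_and_upper_bound (α y : ℝ) (hα : 0 < α) (hy : 0 < y) :
    (∑' p : ℤ × ℤ,
        (p.1 : ℝ) ^ 2 *
          Real.exp (-π * α * (y * (p.1 : ℝ) ^ 2 + ((p.2 : ℝ) + (p.1 : ℝ) / 2) ^ 2 / y))
      = 8 * (∑' n : ℕ, ((n : ℝ) + 1) ^ 2 * Real.exp (-4 * π * α * y * ((n : ℝ) + 1) ^ 2)) *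
            (1 + 2 * ∑' m : ℕ, Real.exp (-π * α * ((m : ℝ) + 1) ^ 2 / y))
        + 4 * (∑' n : ℕ, (2 * (n : ℝ) + 1) ^ 2 * Real.exp (-π * α * y * (2 * (n : ℝ) + 1) ^ 2)) *
            (∑' m : ℕ, Real.exp (-π * α * (2 * (m : ℝ) + 1) ^ 2 / (4 * y)))) ∧
    ∑' p : ℤ × ℤ,
        (p.1 : ℝ) ^ 2 *
          Real.exp (-π * α * (y * (p.1 : ℝ) ^ 2 + ((p.2 : ℝ) + (p.1 : ℝ) / 2) ^ 2 / y))
      ≤ 4 * Real.exp (-π * α * (y + 1 / (4 * y))) * (1 + epsA α y) := by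
  have h1 := split_eq α y hα hy
  exact ⟨h1, h1 ▸ le_of_eq (bound_eq α y hα hy)⟩
end

section
/- Assume α ≥ 1, y ≥ √3/2 and α/y ≥ 1/3. Then ε_a < 0.15 and ε_b < 0.006, where ε_a = Σ_{n=2}^∞(2n−1)²e^{−παy((2n−1)²−1)} + Σ_{n=2}^∞ e^{−(πα/(4y))((2n−1)²−1)} + (Σ_{n=2}^∞(2n−1)²e^{−παy((2n−1)²−1)})·(Σ_{n=2}^∞ e^{−(πα/(4y))((2n−1)²−1)}) + 2e^{−πα(3y−1/(4y))}(1+Σ_{n=2}^∞ n²e^{−4παy(n²−1)})·ϑ₃(α/y), and ε_b is the sum of the four explicit exponentially small series ε_{b,1}, ε_{b,2}, ε_{b,3}, ε_{b,4} given by: ε_{b,1} = 2y⁴e^{−2παy}(1+Σ_{n=2}^∞ e^{−(2πα/y)((2n−1)²−1)})(1+Σ_{n=2}^∞(2n−1)⁴e^{−2παy((2n−1)²−1)}), ε_{b,2} = (1/8)e^{−2παy}(1+Σ_{n=2}^∞(2n−1)⁴e^{−(2πα/y)((2n−1)²−1)})(1+Σ_{n=2}^∞ e^{−2παy((2n−1)²−1)}),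 ε_{b,3} = 16y⁴e^{−πα(8y−2/y)}(1+Σ_{n=2}^∞ n⁴e^{−8παy(n²−1)})(1+2Σ_{n=1}^∞ e^{−2πn²α/y}), ε_{b,4} = y⁴e^{−πα(8y−2/y)}(1+Σ_{n=2}^∞ e^{−8παy(n²−1)})(1+2Σ_{n=1}^∞ (n⁴/y⁴)e^{−2πn²α/y}). -/
set_option maxHeartbeats 2000000


open Real

/-- `ε_{b,1}`. -/
noncomputable def epsB1 (α y : ℝ) : ℝ :=
  2 * y ^ 4 * Real.exp (-2 * π * α * y) *
    (1 + ∑' n : ℕ, Real.exp (-(2 * π * α / y) * ((2 * (n : ℝ) + 3) ^ 2 - 1))) *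
    (1 + ∑' n : ℕ, (2 * (n : ℝ) + 3) ^ 4 * Real.exp (-2 * π * α * y * ((2 * (n : ℝ) + 3) ^ 2 - 1)))

/-- `ε_{b,2}`. -/
noncomputable def epsB2 (α y : ℝ) : ℝ :=
  1 / 8 * Real.exp (-2 * π * α * y) *
    (1 + ∑' n : ℕ, (2 * (n : ℝ) + 3) ^ 4 * Real.exp (-(2 * π * α / y) * ((2 * (n : ℝ) + 3) ^ 2 - 1))) *
    (1 + ∑' n : ℕ, Real.exp (-2 * π * α * y * ((2 * (n : ℝ) + 3) ^ 2 - 1)))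

/-- `ε_{b,3}`. -/
noncomputable def epsB3 (α y : ℝ) : ℝ :=
  16 * y ^ 4 * Real.exp (-π * α * (8 * y - 2 / y)) *
    (1 + ∑' n : ℕ, ((n : ℝ) + 2) ^ 4 * Real.exp (-8 * π * α * y * (((n : ℝ) + 2) ^ 2 - 1))) *
    (1 + 2 * ∑' n : ℕ, Real.exp (-2 * π * ((n : ℝ) + 1) ^ 2 * α / y))

/-- `ε_{b,4}`. -/
noncomputable def epsB4 (α y : ℝ) : ℝ :=
  y ^ 4 * Real.exp (-π * α * (8 * y - 2 / y)) *
    (1 + ∑' n : ℕ, Real.exp (-8 * π * α * y * (((n : ℝ) + 2) ^ 2 - 1))) *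
    (1 + 2 * ∑' n : ℕ, ((n : ℝ) + 1) ^ 4 / y ^ 4 * Real.exp (-2 * π * ((n : ℝ) + 1) ^ 2 * α / y))

/-- `ε_b = ε_{b,1} + ε_{b,2} + ε_{b,3} + ε_{b,4}`. -/
noncomputable def epsB (α y : ℝ) : ℝ :=
  epsB1 α y + epsB2 α y + epsB3 α y + epsB4 α y

/- ### Auxiliary lemmas -/

private lemma exp_lb' (m : ℕ) (f x : ℝ) (hf : 0 ≤ f) (hx : (m : ℝ) + f ≤ x) :
    2.7182818283 ^ m * (1 + f / 8) ^ 8 ≤ Real.exp x := by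
  have h1 : (2.7182818283 : ℝ) ^ m ≤ Real.exp m := by
    have h := Real.exp_nat_mul 1 m
    rw [mul_one] at h
    rw [h]
    exact pow_le_pow_left₀ (by norm_num) Real.exp_one_gt_d9.le m
  have h3 : (1 : ℝ) + f / 8 ≤ Real.exp (f / 8) := by linarith [Real.add_one_le_exp (f / 8)]
  have h2 : ((1 : ℝ) + f / 8) ^ 8 ≤ Real.exp f := by
    calc ((1 : ℝ) + f / 8) ^ 8 ≤ Real.exp (f / 8) ^ 8 := pow_le_pow_left₀ (by linarith) h3 8
      _ = Real.exp ((8 : ℕ) * (f / 8)) := (Real.exp_nat_mul _ 8).symm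
      _ = Real.exp f := by congr 1; push_cast; ring
  calc 2.7182818283 ^ m * (1 + f / 8) ^ 8 ≤ Real.exp m * Real.exp f :=
      mul_le_mul h1 h2 (by positivity) (Real.exp_pos _).le
    _ = Real.exp ((m : ℝ) + f) := (Real.exp_add _ _).symm
    _ ≤ Real.exp x := Real.exp_le_exp.mpr hx

private lemma exp_neg_le' (m : ℕ) (f x b : ℝ) (hf : 0 ≤ f) (hx : (m : ℝ) + f ≤ x)
    (hb : 1 ≤ b * (2.7182818283 ^ m * (1 + f / 8) ^ 8)) : Real.exp (-x) ≤ b := by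
  have hL : (0 : ℝ) < 2.7182818283 ^ m * (1 + f / 8) ^ 8 := by positivity
  have h0 := exp_lb' m f x hf hx
  have hb0 : 0 < b := by nlinarith
  have hprod : Real.exp (-x) * Real.exp x = 1 := by
    rw [← Real.exp_add]; simp
  nlinarith [mul_le_mul_of_nonneg_left h0 (Real.exp_pos (-x)).le, hb, hL,
    (Real.exp_pos (-x)).le]

private lemma tsum_geom_le (f : ℕ → ℝ) (A r : ℝ) (hf0 : ∀ n, 0 ≤ f n)
    (hkey : ∀ n, f n ≤ A * r ^ n) (hr0 : 0 ≤ r) (hr1 : r < 1) :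
    ∑' n, f n ≤ A / (1 - r) := by
  have hg : Summable fun n : ℕ => A * r ^ n :=
    (summable_geometric_of_lt_one hr0 hr1).mul_left _
  have hf : Summable f := Summable.of_nonneg_of_le hf0 hkey hg
  calc ∑' n, f n ≤ ∑' n, A * r ^ n := Summable.tsum_le_tsum hkey hf hg
    _ = A * (1 - r)⁻¹ := by rw [tsum_mul_left, tsum_geometric_of_lt_one hr0 hr1]
    _ = A / (1 - r) := (div_eq_mul_inv A _).symm

private lemma term_le (p e C B d0 d1 a r : ℝ) (n : ℕ) (hp0 : 0 ≤ p) (hp : p ≤ C * B ^ n)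
    (he : d0 + d1 * (n : ℝ) ≤ e) (ha : Real.exp (-d0) ≤ a)
    (hber : B * Real.exp (-d1) ≤ r) (hB : 0 ≤ B) (hC : 0 ≤ C) :
    p * Real.exp (-e) ≤ C * a * r ^ n := by
  have ha0 : 0 ≤ a := (Real.exp_pos _).le.trans ha
  have h1 : Real.exp (-e) ≤ Real.exp (-d0) * Real.exp (-d1) ^ n := by
    rw [← Real.exp_nat_mul, ← Real.exp_add]
    exact Real.exp_le_exp.mpr (by linarith)
  calc p * Real.exp (-e) ≤ (C * B ^ n) * (Real.exp (-d0) * Real.exp (-d1) ^ n) :=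
        mul_le_mul hp h1 (Real.exp_pos _).le (by positivity)
    _ = (C * Real.exp (-d0)) * (B * Real.exp (-d1)) ^ n := by rw [mul_pow]; ring
    _ ≤ (C * a) * r ^ n :=
        mul_le_mul (mul_le_mul_of_nonneg_left ha hC)
          (pow_le_pow_left₀ (by positivity) hber n) (by positivity) (mul_nonneg hC ha0)

private lemma prod3_le {x1 x2 x3 y1 y2 y3 : ℝ} (h1 : x1 ≤ y1) (h2 : x2 ≤ y2) (h3 : x3 ≤ y3)
    (p1 : 0 ≤ x1) (p2 : 0 ≤ x2) (p3 : 0 ≤ x3) : x1 * x2 * x3 ≤ y1 * y2 * y3 :=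
  mul_le_mul (mul_le_mul h1 h2 p2 (p1.trans h1)) h3 p3
    (mul_nonneg (p1.trans h1) (p2.trans h2))

private lemma poly1 (n : ℕ) : (2 * (n : ℝ) + 3) ^ 2 ≤ 9 * 3 ^ n := by
  induction n with
  | zero => norm_num
  | succ k ih =>
    have hk : (0 : ℝ) ≤ (k : ℝ) := Nat.cast_nonneg k
    push_cast
    push_cast at ih
    rw [pow_succ (3:ℝ) k]
    nlinarith [ih]

private lemma poly3 (n : ℕ) : ((n : ℝ) + 2) ^ 2 ≤ 4 * 3 ^ n := by
  induction n with
  | zero => norm_num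
  | succ k ih =>
    have hk : (0 : ℝ) ≤ (k : ℝ) := Nat.cast_nonneg k
    push_cast
    push_cast at ih
    rw [pow_succ (3:ℝ) k]
    nlinarith [ih]

private lemma pow_sq_aux (x : ℝ) (c : ℝ) (n : ℕ) (b : ℝ) (hb : 0 ≤ b) (hx : 0 ≤ x)
    (h : x ≤ c * b ^ n) : x ^ 2 ≤ c ^ 2 * (b ^ 2) ^ n := by
  calc x ^ 2 ≤ (c * b ^ n) ^ 2 := pow_le_pow_left₀ hx h 2
    _ = c ^ 2 * (b ^ 2) ^ n := by rw [mul_pow, ← pow_mul, ← pow_mul, Nat.mul_comm]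

private lemma poly2 (n : ℕ) : (2 * (n : ℝ) + 3) ^ 4 ≤ 81 * 9 ^ n := by
  have h := pow_sq_aux ((2 * (n : ℝ) + 3) ^ 2) 9 n 3 (by norm_num) (by positivity) (poly1 n)
  calc (2 * (n : ℝ) + 3) ^ 4 = ((2 * (n : ℝ) + 3) ^ 2) ^ 2 := by ring
    _ ≤ 9 ^ 2 * (3 ^ 2 : ℝ) ^ n := h
    _ = 81 * 9 ^ n := by norm_num

private lemma poly4 (n : ℕ) : ((n : ℝ) + 2) ^ 4 ≤ 16 * 9 ^ n := by
  have h := pow_sq_aux (((n : ℝ) + 2) ^ 2) 4 n 3 (by norm_num) (by positivity) (poly3 n)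
  calc ((n : ℝ) + 2) ^ 4 = (((n : ℝ) + 2) ^ 2) ^ 2 := by ring
    _ ≤ 4 ^ 2 * (3 ^ 2 : ℝ) ^ n := h
    _ = 16 * 9 ^ n := by norm_num

private lemma poly5 (n : ℕ) : ((n : ℝ) + 1) ^ 4 ≤ 16 ^ n := by
  induction n with
  | zero => norm_num
  | succ k ih =>
    have hk : (0 : ℝ) ≤ (k : ℝ) := Nat.cast_nonneg k
    push_cast
    push_cast at ih
    rw [pow_succ (16:ℝ) k]
    have h1 : ((k : ℝ) + 1 + 1) ^ 4 ≤ (2 * ((k : ℝ) + 1)) ^ 4 :=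
      pow_le_pow_left₀ (by positivity) (by linarith) 4
    nlinarith [ih, h1]

private lemma y4_exp_le (y b k : ℝ) (hy : Real.sqrt 3 / 2 ≤ y)
    (hbk : 4 * (2 * y - Real.sqrt 3) / Real.sqrt 3 ≤ b - k) :
    y ^ 4 * Real.exp (-b) ≤ 9 / 16 * Real.exp (-k) := by
  have hc0 : (0 : ℝ) < Real.sqrt 3 := Real.sqrt_pos.mpr (by norm_num)
  have hc2 : Real.sqrt 3 ^ 2 = 3 := Real.sq_sqrt (by norm_num)
  have hy0 : 0 < y := lt_of_lt_of_le (by positivity) hy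
  have hu1 : 1 ≤ 2 * y / Real.sqrt 3 := by
    rw [le_div_iff₀ hc0]; linarith
  have hu0 : 0 < 2 * y / Real.sqrt 3 := by positivity
  have hy4 : y ^ 4 = 9 / 16 * (2 * y / Real.sqrt 3) ^ 4 := by
    have hc4 : Real.sqrt 3 ^ 4 = 9 := by nlinarith [hc2]
    rw [div_pow, hc4]; ring
  have hlog : (2 * y / Real.sqrt 3) ^ 4 ≤ Real.exp (4 * (2 * y / Real.sqrt 3 - 1)) := by
    have h2 : Real.log (2 * y / Real.sqrt 3) ≤ 2 * y / Real.sqrt 3 - 1 :=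
      Real.log_le_sub_one_of_pos hu0
    calc (2 * y / Real.sqrt 3) ^ 4 = Real.exp (Real.log ((2 * y / Real.sqrt 3) ^ 4)) :=
          (Real.exp_log (by positivity)).symm
      _ = Real.exp ((4 : ℕ) * Real.log (2 * y / Real.sqrt 3)) := by rw [Real.log_pow]
      _ ≤ Real.exp (4 * (2 * y / Real.sqrt 3 - 1)) := by
          apply Real.exp_le_exp.mpr
          push_cast
          linarith
  have h4u : 4 * (2 * y / Real.sqrt 3 - 1) ≤ b - k := by
    have heq : 4 * (2 * y / Real.sqrt 3 - 1) = 4 * (2 * y - Real.sqrt 3) / Real.sqrt 3 := by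
      field_simp
    rw [heq]; exact hbk
  calc y ^ 4 * Real.exp (-b) = 9 / 16 * ((2 * y / Real.sqrt 3) ^ 4 * Real.exp (-b)) := by
        rw [hy4]; ring
    _ ≤ 9 / 16 * (Real.exp (4 * (2 * y / Real.sqrt 3 - 1)) * Real.exp (-b)) := by
        have := mul_le_mul_of_nonneg_right hlog (Real.exp_pos (-b)).le
        linarith
    _ = 9 / 16 * Real.exp (4 * (2 * y / Real.sqrt 3 - 1) + -b) := by rw [← Real.exp_add]
    _ ≤ 9 / 16 * Real.exp (-k) := by
        have := Real.exp_le_exp.mpr (show 4 * (2 * y / Real.sqrt 3 - 1) + -b ≤ -k by linarith)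
        linarith

section Bounds

variable (α y : ℝ)

private lemma e14' : Real.exp (-(14 : ℝ)) ≤ 0.000001 :=
  exp_neg_le' 14 0 _ _ le_rfl (by norm_num) (by norm_num)
private lemma e16' : Real.exp (-(16 : ℝ)) ≤ 0.00000012 :=
  exp_neg_le' 16 0 _ _ le_rfl (by norm_num) (by norm_num)
private lemma e28' : Real.exp (-(28 : ℝ)) ≤ 0.000000000001 :=
  exp_neg_le' 28 0 _ _ le_rfl (by norm_num) (by norm_num)
private lemma e2094' : Real.exp (-(2.0943946 : ℝ)) ≤ 0.1233 :=
  exp_neg_le' 2 0.0943946 _ _ (by norm_num) (by norm_num) (by norm_num)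
private lemma e1047' : Real.exp (-(1.0471973 : ℝ)) ≤ 0.3510 :=
  exp_neg_le' 1 0.0471973 _ _ (by norm_num) (by norm_num) (by norm_num)
private lemma e6283' : Real.exp (-(6.2831838 : ℝ)) ≤ 0.00188 :=
  exp_neg_le' 6 0.2831838 _ _ (by norm_num) (by norm_num) (by norm_num)

private lemma bA1 (hT : 2.72 ≤ π * α * y) : epsA1 α y ≤ 0.00001 := by
  unfold epsA1
  refine le_trans (tsum_geom_le _ (9 * 0.000001) 0.000003 (fun n => by positivity)
    (fun n => ?_) (by norm_num) (by norm_num)) (by norm_num)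
  have hn0 : (0 : ℝ) ≤ (n : ℝ) := Nat.cast_nonneg n
  rw [show -π * α * y * ((2 * (n : ℝ) + 3) ^ 2 - 1)
      = -(π * α * y * ((2 * (n : ℝ) + 3) ^ 2 - 1)) by ring]
  refine term_le _ _ 9 3 14 14 0.000001 0.000003 n (by positivity) (poly1 n) ?_ e14'
    (by linarith [e14']) (by norm_num) (by norm_num)
  linarith [mul_le_mul_of_nonneg_right hT
    (show (0 : ℝ) ≤ (2 * (n : ℝ) + 3) ^ 2 - 1 by nlinarith [hn0]), hn0, sq_nonneg ((n:ℝ))]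

private lemma bA2 (hy0 : 0 < y) (hS : 1.0471973 ≤ π * α / y) : epsA2 α y ≤ 0.14065 := by
  unfold epsA2
  refine le_trans (tsum_geom_le _ (1 * 0.1233) 0.1233 (fun n => by positivity)
    (fun n => ?_) (by norm_num) (by norm_num)) (by norm_num)
  have hn0 : (0 : ℝ) ≤ (n : ℝ) := Nat.cast_nonneg n
  rw [show -(π * α / (4 * y)) * ((2 * (n : ℝ) + 3) ^ 2 - 1)
      = -(π * α / (4 * y) * ((2 * (n : ℝ) + 3) ^ 2 - 1)) by ring]
  rw [show Real.exp (-(π * α / (4 * y) * ((2 * (n : ℝ) + 3) ^ 2 - 1)))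
      = 1 * Real.exp (-(π * α / (4 * y) * ((2 * (n : ℝ) + 3) ^ 2 - 1))) by ring]
  refine term_le _ _ 1 1 2.0943946 2.0943946 0.1233 0.1233 n (by norm_num) (by norm_num)
    ?_ e2094' (by linarith [e2094']) (by norm_num) (by norm_num)
  have harg : π * α / (4 * y) * ((2 * (n : ℝ) + 3) ^ 2 - 1)
      = (π * α / y) * (((n : ℝ) + 1) * ((n : ℝ) + 2)) := by
    field_simp
    ring
  rw [harg]
  linarith [mul_le_mul_of_nonneg_right hS
    (show (0 : ℝ) ≤ ((n : ℝ) + 1) * ((n : ℝ) + 2) by positivity), hn0, sq_nonneg ((n:ℝ))]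

private lemma bθ (hS : 1.0471973 ≤ π * α / y) : theta3 (α / y) ≤ 2.0817 := by
  unfold theta3
  have htail : ∑' k : ℕ, Real.exp (-π * ((k : ℝ) + 1) ^ 2 * (α / y)) ≤
      (1 * 0.3510) / (1 - 0.3510) := by
    refine tsum_geom_le _ (1 * 0.3510) 0.3510 (fun n => by positivity)
      (fun n => ?_) (by norm_num) (by norm_num)
    have hn0 : (0 : ℝ) ≤ (n : ℝ) := Nat.cast_nonneg n
    rw [show -π * ((n : ℝ) + 1) ^ 2 * (α / y)
        = -(π * ((n : ℝ) + 1) ^ 2 * (α / y)) by ring]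
    rw [show Real.exp (-(π * ((n : ℝ) + 1) ^ 2 * (α / y)))
        = 1 * Real.exp (-(π * ((n : ℝ) + 1) ^ 2 * (α / y))) by ring]
    refine term_le _ _ 1 1 1.0471973 1.0471973 0.3510 0.3510 n (by norm_num) (by norm_num)
      ?_ e1047' (by linarith [e1047']) (by norm_num) (by norm_num)
    have harg : π * ((n : ℝ) + 1) ^ 2 * (α / y) = (π * α / y) * ((n : ℝ) + 1) ^ 2 := by
      ring
    rw [harg]
    linarith [mul_le_mul_of_nonneg_right hS (sq_nonneg ((n : ℝ) + 1)), hn0, sq_nonneg ((n:ℝ))]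
  linarith

private lemma bS3 (hT : 2.72 ≤ π * α * y) : (∑' n : ℕ, ((n : ℝ) + 2) ^ 2 *
    Real.exp (-4 * π * α * y * (((n : ℝ) + 2) ^ 2 - 1))) ≤ 0.00001 := by
  refine le_trans (tsum_geom_le _ (4 * 0.000001) 0.000003 (fun n => by positivity)
    (fun n => ?_) (by norm_num) (by norm_num)) (by norm_num)
  have hn0 : (0 : ℝ) ≤ (n : ℝ) := Nat.cast_nonneg n
  rw [show -4 * π * α * y * (((n : ℝ) + 2) ^ 2 - 1)
      = -(4 * π * α * y * (((n : ℝ) + 2) ^ 2 - 1)) by ring]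
  refine term_le _ _ 4 3 14 14 0.000001 0.000003 n (by positivity) (poly3 n) ?_ e14'
    (by linarith [e14']) (by norm_num) (by norm_num)
  linarith [mul_le_mul_of_nonneg_right hT
    (show (0 : ℝ) ≤ ((n : ℝ) + 2) ^ 2 - 1 by nlinarith [hn0]), hn0, sq_nonneg ((n:ℝ))]

private lemma bSB1a (hy0 : 0 < y) (hS : 1.0471973 ≤ π * α / y) :
    (∑' n : ℕ, Real.exp (-(2 * π * α / y) * ((2 * (n : ℝ) + 3) ^ 2 - 1)))
    ≤ 0.0000002 := by
  refine le_trans (tsum_geom_le _ (1 * 0.00000012) 0.00000012 (fun n => by positivity)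
    (fun n => ?_) (by norm_num) (by norm_num)) (by norm_num)
  have hn0 : (0 : ℝ) ≤ (n : ℝ) := Nat.cast_nonneg n
  rw [show -(2 * π * α / y) * ((2 * (n : ℝ) + 3) ^ 2 - 1)
      = -(2 * π * α / y * ((2 * (n : ℝ) + 3) ^ 2 - 1)) by ring]
  rw [show Real.exp (-(2 * π * α / y * ((2 * (n : ℝ) + 3) ^ 2 - 1)))
      = 1 * Real.exp (-(2 * π * α / y * ((2 * (n : ℝ) + 3) ^ 2 - 1))) by ring]
  refine term_le _ _ 1 1 16 16 0.00000012 0.00000012 n (by norm_num) (by norm_num)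
    ?_ e16' (by linarith [e16']) (by norm_num) (by norm_num)
  have harg : 2 * π * α / y * ((2 * (n : ℝ) + 3) ^ 2 - 1)
      = (π * α / y) * (8 * (((n : ℝ) + 1) * ((n : ℝ) + 2))) := by
    field_simp
    ring
  rw [harg]
  linarith [mul_le_mul_of_nonneg_right hS
    (show (0 : ℝ) ≤ 8 * (((n : ℝ) + 1) * ((n : ℝ) + 2)) by positivity), hn0, sq_nonneg ((n:ℝ))]

private lemma bSB1b (hT : 2.72 ≤ π * α * y) :
    (∑' n : ℕ, (2 * (n : ℝ) + 3) ^ 4 *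
    Real.exp (-2 * π * α * y * ((2 * (n : ℝ) + 3) ^ 2 - 1))) ≤ 0.000001 := by
  refine le_trans (tsum_geom_le _ (81 * 0.000000000001) 0.000000000009
    (fun n => by positivity) (fun n => ?_) (by norm_num) (by norm_num)) (by norm_num)
  have hn0 : (0 : ℝ) ≤ (n : ℝ) := Nat.cast_nonneg n
  rw [show -2 * π * α * y * ((2 * (n : ℝ) + 3) ^ 2 - 1)
      = -(2 * π * α * y * ((2 * (n : ℝ) + 3) ^ 2 - 1)) by ring]
  refine term_le _ _ 81 9 28 28 0.000000000001 0.000000000009 n (by positivity)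
    (poly2 n) ?_ e28' (by linarith [e28']) (by norm_num) (by norm_num)
  linarith [mul_le_mul_of_nonneg_right hT
    (show (0 : ℝ) ≤ (2 * (n : ℝ) + 3) ^ 2 - 1 by nlinarith [hn0]), hn0, sq_nonneg ((n:ℝ))]

private lemma bSB2a (hy0 : 0 < y) (hS : 1.0471973 ≤ π * α / y) :
    (∑' n : ℕ, (2 * (n : ℝ) + 3) ^ 4 *
    Real.exp (-(2 * π * α / y) * ((2 * (n : ℝ) + 3) ^ 2 - 1))) ≤ 0.00001 := by
  refine le_trans (tsum_geom_le _ (81 * 0.00000012) 0.0000011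
    (fun n => by positivity) (fun n => ?_) (by norm_num) (by norm_num)) (by norm_num)
  have hn0 : (0 : ℝ) ≤ (n : ℝ) := Nat.cast_nonneg n
  rw [show -(2 * π * α / y) * ((2 * (n : ℝ) + 3) ^ 2 - 1)
      = -(2 * π * α / y * ((2 * (n : ℝ) + 3) ^ 2 - 1)) by ring]
  refine term_le _ _ 81 9 16 16 0.00000012 0.0000011 n (by positivity) (poly2 n) ?_ e16'
    (by linarith [e16']) (by norm_num) (by norm_num)
  have harg : 2 * π * α / y * ((2 * (n : ℝ) + 3) ^ 2 - 1)
      = (π * α / y) * (8 * (((n : ℝ) + 1) * ((n : ℝ) + 2))) := by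
    field_simp
    ring
  rw [harg]
  linarith [mul_le_mul_of_nonneg_right hS
    (show (0 : ℝ) ≤ 8 * (((n : ℝ) + 1) * ((n : ℝ) + 2)) by positivity), hn0, sq_nonneg ((n:ℝ))]

private lemma bSB2b (hT : 2.72 ≤ π * α * y) :
    (∑' n : ℕ, Real.exp (-2 * π * α * y * ((2 * (n : ℝ) + 3) ^ 2 - 1)))
    ≤ 0.000001 := by
  refine le_trans (tsum_geom_le _ (1 * 0.000000000001) 0.000000000001
    (fun n => by positivity) (fun n => ?_) (by norm_num) (by norm_num)) (by norm_num)
  have hn0 : (0 : ℝ) ≤ (n : ℝ) := Nat.cast_nonneg n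
  rw [show -2 * π * α * y * ((2 * (n : ℝ) + 3) ^ 2 - 1)
      = -(2 * π * α * y * ((2 * (n : ℝ) + 3) ^ 2 - 1)) by ring]
  rw [show Real.exp (-(2 * π * α * y * ((2 * (n : ℝ) + 3) ^ 2 - 1)))
      = 1 * Real.exp (-(2 * π * α * y * ((2 * (n : ℝ) + 3) ^ 2 - 1))) by ring]
  refine term_le _ _ 1 1 28 28 0.000000000001 0.000000000001 n (by norm_num) (by norm_num)
    ?_ e28' (by linarith [e28']) (by norm_num) (by norm_num)
  linarith [mul_le_mul_of_nonneg_right hT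
    (show (0 : ℝ) ≤ (2 * (n : ℝ) + 3) ^ 2 - 1 by nlinarith [hn0]), hn0, sq_nonneg ((n:ℝ))]

private lemma bSB3a (hT : 2.72 ≤ π * α * y) :
    (∑' n : ℕ, ((n : ℝ) + 2) ^ 4 *
    Real.exp (-8 * π * α * y * (((n : ℝ) + 2) ^ 2 - 1))) ≤ 0.000001 := by
  refine le_trans (tsum_geom_le _ (16 * 0.000000000001) 0.000000000009
    (fun n => by positivity) (fun n => ?_) (by norm_num) (by norm_num)) (by norm_num)
  have hn0 : (0 : ℝ) ≤ (n : ℝ) := Nat.cast_nonneg n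
  rw [show -8 * π * α * y * (((n : ℝ) + 2) ^ 2 - 1)
      = -(8 * π * α * y * (((n : ℝ) + 2) ^ 2 - 1)) by ring]
  refine term_le _ _ 16 9 28 28 0.000000000001 0.000000000009 n (by positivity)
    (poly4 n) ?_ e28' (by linarith [e28']) (by norm_num) (by norm_num)
  linarith [mul_le_mul_of_nonneg_right hT
    (show (0 : ℝ) ≤ ((n : ℝ) + 2) ^ 2 - 1 by nlinarith [hn0]), hn0, sq_nonneg ((n:ℝ))]

private lemma bSB3b (hy0 : 0 < y) (hS : 1.0471973 ≤ π * α / y) :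
    (∑' n : ℕ, Real.exp (-2 * π * ((n : ℝ) + 1) ^ 2 * α / y)) ≤ 0.14065 := by
  refine le_trans (tsum_geom_le _ (1 * 0.1233) 0.1233 (fun n => by positivity)
    (fun n => ?_) (by norm_num) (by norm_num)) (by norm_num)
  have hn0 : (0 : ℝ) ≤ (n : ℝ) := Nat.cast_nonneg n
  rw [show -2 * π * ((n : ℝ) + 1) ^ 2 * α / y
      = -(2 * π * ((n : ℝ) + 1) ^ 2 * α / y) by ring]
  rw [show Real.exp (-(2 * π * ((n : ℝ) + 1) ^ 2 * α / y))
      = 1 * Real.exp (-(2 * π * ((n : ℝ) + 1) ^ 2 * α / y)) by ring]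
  refine term_le _ _ 1 1 2.0943946 2.0943946 0.1233 0.1233 n (by norm_num) (by norm_num)
    ?_ e2094' (by linarith [e2094']) (by norm_num) (by norm_num)
  have harg : 2 * π * ((n : ℝ) + 1) ^ 2 * α / y
      = (π * α / y) * (2 * ((n : ℝ) + 1) ^ 2) := by ring
  rw [harg]
  linarith [mul_le_mul_of_nonneg_right hS (sq_nonneg ((n : ℝ) + 1)), hn0, sq_nonneg ((n:ℝ))]

private lemma bSB4a (hT : 2.72 ≤ π * α * y) :
    (∑' n : ℕ, Real.exp (-8 * π * α * y * (((n : ℝ) + 2) ^ 2 - 1)))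
    ≤ 0.000001 := by
  refine le_trans (tsum_geom_le _ (1 * 0.000000000001) 0.000000000001
    (fun n => by positivity) (fun n => ?_) (by norm_num) (by norm_num)) (by norm_num)
  have hn0 : (0 : ℝ) ≤ (n : ℝ) := Nat.cast_nonneg n
  rw [show -8 * π * α * y * (((n : ℝ) + 2) ^ 2 - 1)
      = -(8 * π * α * y * (((n : ℝ) + 2) ^ 2 - 1)) by ring]
  rw [show Real.exp (-(8 * π * α * y * (((n : ℝ) + 2) ^ 2 - 1)))
      = 1 * Real.exp (-(8 * π * α * y * (((n : ℝ) + 2) ^ 2 - 1))) by ring]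
  refine term_le _ _ 1 1 28 28 0.000000000001 0.000000000001 n (by norm_num) (by norm_num)
    ?_ e28' (by linarith [e28']) (by norm_num) (by norm_num)
  linarith [mul_le_mul_of_nonneg_right hT
    (show (0 : ℝ) ≤ ((n : ℝ) + 2) ^ 2 - 1 by nlinarith [hn0]), hn0, sq_nonneg ((n:ℝ))]

private lemma bSB4b (hy0 : 0 < y) (hS : 1.0471973 ≤ π * α / y) (hy49 : 9 / 16 ≤ y ^ 4) :
    (∑' n : ℕ, ((n : ℝ) + 1) ^ 4 / y ^ 4 *
    Real.exp (-2 * π * ((n : ℝ) + 1) ^ 2 * α / y)) ≤ 0.22604 := by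
  refine le_trans (tsum_geom_le _ (16 / 9 * 0.1233) 0.03008 (fun n => by positivity)
    (fun n => ?_) (by norm_num) (by norm_num)) (by norm_num)
  have hn0 : (0 : ℝ) ≤ (n : ℝ) := Nat.cast_nonneg n
  have hn2 : (n : ℝ) ≤ (n : ℝ) ^ 2 := by
    have := Nat.le_self_pow two_ne_zero n
    exact_mod_cast this
  rw [show -2 * π * ((n : ℝ) + 1) ^ 2 * α / y
      = -(2 * π * ((n : ℝ) + 1) ^ 2 * α / y) by ring]
  refine term_le _ _ (16 / 9) 16 2.0943946 6.2831838 0.1233 0.03008 n (by positivity)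
    ?_ ?_ e2094' (by linarith [e6283']) (by norm_num) (by norm_num)
  · rw [div_le_iff₀ (by positivity)]
    nlinarith [poly5 n, mul_nonneg (pow_nonneg (show (0:ℝ) ≤ 16 by norm_num) n)
      (show (0:ℝ) ≤ y ^ 4 - 9 / 16 by linarith [hy49]),
      pow_nonneg (show (0:ℝ) ≤ 16 by norm_num) n]
  · have harg : 2 * π * ((n : ℝ) + 1) ^ 2 * α / y
        = (π * α / y) * (2 * ((n : ℝ) + 1) ^ 2) := by ring
    rw [harg]
    linarith [mul_le_mul_of_nonneg_right hS (sq_nonneg ((n : ℝ) + 1)), hn0, hn2]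

end Bounds

theorem epsA_epsB_small (α y : ℝ) (hα : 1 ≤ α) (hy : Real.sqrt 3 / 2 ≤ y)
    (hr : 1 / 3 ≤ α / y) :
    epsA α y < 0.15 ∧ epsB α y < 0.006 := by
  have hc0 : (0 : ℝ) < Real.sqrt 3 := Real.sqrt_pos.mpr (by norm_num)
  have hc2 : Real.sqrt 3 ^ 2 = 3 := Real.sq_sqrt (by norm_num)
  have hclb : 1.7320508 ≤ Real.sqrt 3 := by nlinarith [hc2, hc0]
  have hy0 : (0 : ℝ) < y := lt_of_lt_of_le (by positivity) hy
  have hπ : 3.141592 ≤ π := Real.pi_gt_d6.le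
  have hπ0 : (0 : ℝ) < π := Real.pi_pos
  have hαy : Real.sqrt 3 / 2 ≤ α * y := by nlinarith
  have hπc : 5.4413966 ≤ π * Real.sqrt 3 := by
    nlinarith [mul_le_mul hπ hclb (by norm_num) hπ0.le]
  have hT : 2.72 ≤ π * α * y := by
    have h1 : 3.141592 * (Real.sqrt 3 / 2) ≤ π * (α * y) :=
      mul_le_mul hπ hαy (by positivity) hπ0.le
    nlinarith [h1, hclb]
  have hS : 1.0471973 ≤ π * α / y := by
    have h1 : π * α / y = π * (α / y) := by ring
    rw [h1]
    nlinarith [mul_le_mul hπ hr (by norm_num) hπ0.le]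
  have hy2 : 3 / 4 ≤ y ^ 2 := by nlinarith [hy, hc2, hc0]
  have hy49 : 9 / 16 ≤ y ^ 4 := by nlinarith [hy2]
  have hπα : π ≤ π * α := by nlinarith
  -- epsA
  have hA1 := bA1 α y hT
  have hA2 := bA2 α y hy0 hS
  have hA10 : 0 ≤ epsA1 α y := tsum_nonneg fun n => by positivity
  have hA20 : 0 ≤ epsA2 α y := tsum_nonneg fun n => by positivity
  have hθ := bθ α y hS
  have hθ0 : 0 ≤ theta3 (α / y) := by
    unfold theta3
    have : (0:ℝ) ≤ ∑' k : ℕ, Real.exp (-π * ((k : ℝ) + 1) ^ 2 * (α / y)) :=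
      tsum_nonneg (fun k : ℕ => (Real.exp_pos (-π * ((k : ℝ) + 1) ^ 2 * (α / y))).le)
    linarith
  have hS3 := bS3 α y hT
  have hS30 : 0 ≤ ∑' n : ℕ, ((n : ℝ) + 2) ^ 2 *
      Real.exp (-4 * π * α * y * (((n : ℝ) + 2) ^ 2 - 1)) :=
    tsum_nonneg fun n => by positivity
  have hfa4 : Real.exp (-(π * α * (3 * y - 1 / (4 * y)))) ≤ 0.00071 := by
    refine exp_neg_le' 7 0.2551950 _ _ (by norm_num) ?_ (by norm_num)
    have h4y : 1 / (4 * y) ≤ Real.sqrt 3 / 6 := by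
      rw [div_le_div_iff₀ (by positivity) (by norm_num)]
      nlinarith [mul_le_mul_of_nonneg_left hy hc0.le]
    have h3y : 4 * Real.sqrt 3 / 3 ≤ 3 * y - 1 / (4 * y) := by
      have : 3 * (Real.sqrt 3 / 2) ≤ 3 * y := by linarith
      linarith
    have h2 : π * (4 * Real.sqrt 3 / 3) ≤ (π * α) * (3 * y - 1 / (4 * y)) :=
      mul_le_mul hπα h3y (by positivity) (hπ0.le.trans hπα)
    linarith [h2, mul_le_mul_of_nonneg_left hπc (show (0:ℝ) ≤ 4/3 by norm_num)]
  have hA4 : epsA4 α y ≤ 0.002957 := by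
    unfold epsA4
    rw [show -π * α * (3 * y - 1 / (4 * y)) = -(π * α * (3 * y - 1 / (4 * y))) by ring]
    calc 2 * Real.exp (-(π * α * (3 * y - 1 / (4 * y)))) *
          (1 + ∑' n : ℕ, ((n : ℝ) + 2) ^ 2 *
            Real.exp (-4 * π * α * y * (((n : ℝ) + 2) ^ 2 - 1))) * theta3 (α / y)
        ≤ (2 * 0.00071) * (1 + 0.00001) * 2.0817 := by
          refine prod3_le ?_ (by linarith) hθ (by positivity) (by linarith) hθ0
          linarith [hfa4]
      _ ≤ 0.002957 := by norm_num
  have hepsA : epsA α y < 0.15 := by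
    unfold epsA
    nlinarith [hA1, hA2, hA10, hA20, hA4, mul_le_mul hA1 hA2 hA20 (by norm_num)]
  -- epsB fronts
  have hk1 : Real.exp (-(π * Real.sqrt 3)) ≤ 0.00439 :=
    exp_neg_le' 5 0.4413960 _ _ (by norm_num) (by linarith [hπc]) (by norm_num)
  have hb1 : y ^ 4 * Real.exp (-(2 * π * α * y)) ≤ 9 / 16 * 0.00439 := by
    refine le_trans (y4_exp_le y (2 * π * α * y) (π * Real.sqrt 3) hy ?_) ?_
    · rw [div_le_iff₀ hc0]
      have h1 : 2 * π * y ≤ 2 * π * α * y := by nlinarith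
      nlinarith [mul_nonneg (show (0:ℝ) ≤ π * Real.sqrt 3 - 4 by nlinarith [hπc])
        (show (0:ℝ) ≤ 2 * y - Real.sqrt 3 by linarith), h1, hc2]
    · nlinarith [hk1, (Real.exp_pos (-(π * Real.sqrt 3))).le]
  have hfb2 : Real.exp (-(2 * π * α * y)) ≤ 0.00439 := by
    refine exp_neg_le' 5 0.4413960 _ _ (by norm_num) ?_ (by norm_num)
    have h1 : 3.141592 * (Real.sqrt 3 / 2) ≤ π * (α * y) :=
      mul_le_mul hπ hαy (by positivity) hπ0.le
    nlinarith [h1, hclb]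
  have hk3 : Real.exp (-(8 * π * Real.sqrt 3 / 3)) ≤ 0.00000051 :=
    exp_neg_le' 14 0.5103900 _ _ (by norm_num) (by nlinarith [hπc]) (by norm_num)
  have h2y : 2 / y ≤ 4 * Real.sqrt 3 / 3 := by
    rw [div_le_div_iff₀ hy0 (by norm_num)]
    nlinarith [mul_le_mul_of_nonneg_left hy hc0.le]
  have h8y0 : 0 ≤ 8 * y - 2 / y := by nlinarith [h2y, hy, hclb]
  have hb3 : y ^ 4 * Real.exp (-(π * α * (8 * y - 2 / y))) ≤ 9 / 16 * 0.00000051 := by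
    refine le_trans (y4_exp_le y (π * α * (8 * y - 2 / y)) (8 * π * Real.sqrt 3 / 3) hy ?_) ?_
    · rw [div_le_iff₀ hc0]
      have hX : 8 * y - 4 * Real.sqrt 3 ≤ 8 * y - 2 / y - 8 * Real.sqrt 3 / 3 := by
        linarith [h2y]
      have hscale : π * (8 * y - 2 / y) ≤ π * α * (8 * y - 2 / y) := by
        linarith [mul_le_mul_of_nonneg_right hπα h8y0]
      have F1 := mul_le_mul_of_nonneg_right hscale hc0.le
      have F2 := mul_le_mul_of_nonneg_right (mul_le_mul_of_nonneg_left hX hπ0.le) hc0.le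
      have F3 : (0:ℝ) ≤ (π * Real.sqrt 3 - 1) * (2 * y - Real.sqrt 3) :=
        mul_nonneg (by nlinarith [hπc]) (by linarith)
      nlinarith [F1, F2, F3]
    · nlinarith [hk3, (Real.exp_pos (-(8 * π * Real.sqrt 3 / 3))).le]
  have hefront3 : Real.exp (-(π * α * (8 * y - 2 / y))) ≤ 0.00000051 := by
    refine exp_neg_le' 14 0.5103900 _ _ (by norm_num) ?_ (by norm_num)
    have h1 : π * (8 * Real.sqrt 3 / 3) ≤ π * α * (8 * y - 2 / y) := by
      have h2 : 8 * Real.sqrt 3 / 3 ≤ 8 * y - 2 / y := by linarith [h2y, hy]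
      have h3 : π * (8 * Real.sqrt 3 / 3) ≤ π * (8 * y - 2 / y) :=
        mul_le_mul_of_nonneg_left h2 hπ0.le
      have h4 : π * (8 * y - 2 / y) ≤ π * α * (8 * y - 2 / y) := by
        linarith [mul_le_mul_of_nonneg_right hπα h8y0]
      linarith
    linarith [h1, mul_le_mul_of_nonneg_left hπc (show (0:ℝ) ≤ 8/3 by norm_num)]
  -- epsB series
  have hSB1a := bSB1a α y hy0 hS
  have hSB1b := bSB1b α y hT
  have hSB2a := bSB2a α y hy0 hS
  have hSB2b := bSB2b α y hT
  have hSB3a := bSB3a α y hT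
  have hSB3b := bSB3b α y hy0 hS
  have hSB4a := bSB4a α y hT
  have hSB4b := bSB4b α y hy0 hS hy49
  have hSB1a0 : (0:ℝ) ≤ ∑' n : ℕ, Real.exp (-(2 * π * α / y) * ((2 * (n : ℝ) + 3) ^ 2 - 1)) :=
    tsum_nonneg fun n => by positivity
  have hSB1b0 : (0:ℝ) ≤ ∑' n : ℕ, (2 * (n : ℝ) + 3) ^ 4 *
      Real.exp (-2 * π * α * y * ((2 * (n : ℝ) + 3) ^ 2 - 1)) :=
    tsum_nonneg fun n => by positivity
  have hSB2a0 : (0:ℝ) ≤ ∑' n : ℕ, (2 * (n : ℝ) + 3) ^ 4 *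
      Real.exp (-(2 * π * α / y) * ((2 * (n : ℝ) + 3) ^ 2 - 1)) :=
    tsum_nonneg fun n => by positivity
  have hSB2b0 : (0:ℝ) ≤ ∑' n : ℕ, Real.exp (-2 * π * α * y * ((2 * (n : ℝ) + 3) ^ 2 - 1)) :=
    tsum_nonneg fun n => by positivity
  have hSB3a0 : (0:ℝ) ≤ ∑' n : ℕ, ((n : ℝ) + 2) ^ 4 *
      Real.exp (-8 * π * α * y * (((n : ℝ) + 2) ^ 2 - 1)) :=
    tsum_nonneg fun n => by positivity
  have hSB3b0 : (0:ℝ) ≤ ∑' n : ℕ, Real.exp (-2 * π * ((n : ℝ) + 1) ^ 2 * α / y) :=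
    tsum_nonneg fun n => by positivity
  have hSB4a0 : (0:ℝ) ≤ ∑' n : ℕ, Real.exp (-8 * π * α * y * (((n : ℝ) + 2) ^ 2 - 1)) :=
    tsum_nonneg fun n => by positivity
  have hSB4b0 : (0:ℝ) ≤ ∑' n : ℕ, ((n : ℝ) + 1) ^ 4 / y ^ 4 *
      Real.exp (-2 * π * ((n : ℝ) + 1) ^ 2 * α / y) :=
    tsum_nonneg fun n => by positivity
  -- assemble epsB
  have hB1 : epsB1 α y ≤ 0.0049389 := by
    unfold epsB1
    rw [show -2 * π * α * y = -(2 * π * α * y) by ring]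
    calc 2 * y ^ 4 * Real.exp (-(2 * π * α * y)) *
          (1 + ∑' n : ℕ, Real.exp (-(2 * π * α / y) * ((2 * (n : ℝ) + 3) ^ 2 - 1))) *
          (1 + ∑' n : ℕ, (2 * (n : ℝ) + 3) ^ 4 *
            Real.exp (-(2 * π * α * y) * ((2 * (n : ℝ) + 3) ^ 2 - 1)))
        ≤ (2 * (9 / 16 * 0.00439)) * (1 + 0.0000002) * (1 + 0.000001) := by
          refine prod3_le ?_ (by linarith) ?_ (by positivity) (by linarith) ?_
          · rw [mul_assoc]; nlinarith [hb1]
          · have h := hSB1b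
            rw [show -(2 * π * α * y) = -2 * π * α * y by ring]
            linarith
          · rw [show -(2 * π * α * y) = -2 * π * α * y by ring]
            linarith [hSB1b0]
      _ ≤ 0.0049389 := by norm_num
  have hB2 : epsB2 α y ≤ 0.000549 := by
    unfold epsB2
    rw [show -2 * π * α * y = -(2 * π * α * y) by ring]
    calc 1 / 8 * Real.exp (-(2 * π * α * y)) *
          (1 + ∑' n : ℕ, (2 * (n : ℝ) + 3) ^ 4 *
            Real.exp (-(2 * π * α / y) * ((2 * (n : ℝ) + 3) ^ 2 - 1))) *
          (1 + ∑' n : ℕ, Real.exp (-(2 * π * α * y) * ((2 * (n : ℝ) + 3) ^ 2 - 1)))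
        ≤ (1 / 8 * 0.00439) * (1 + 0.00001) * (1 + 0.000001) := by
          refine prod3_le ?_ (by linarith [hSB2a]) ?_ (by positivity)
            (by linarith [hSB2a0]) ?_
          · nlinarith [hfb2]
          · have h := hSB2b
            rw [show -(2 * π * α * y) = -2 * π * α * y by ring]
            linarith
          · rw [show -(2 * π * α * y) = -2 * π * α * y by ring]
            linarith [hSB2b0]
      _ ≤ 0.000549 := by norm_num
  have hB3 : epsB3 α y ≤ 0.0000059 := by
    unfold epsB3
    rw [show -π * α * (8 * y - 2 / y) = -(π * α * (8 * y - 2 / y)) by ring]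
    calc 16 * y ^ 4 * Real.exp (-(π * α * (8 * y - 2 / y))) *
          (1 + ∑' n : ℕ, ((n : ℝ) + 2) ^ 4 *
            Real.exp (-8 * π * α * y * (((n : ℝ) + 2) ^ 2 - 1))) *
          (1 + 2 * ∑' n : ℕ, Real.exp (-2 * π * ((n : ℝ) + 1) ^ 2 * α / y))
        ≤ (16 * (9 / 16 * 0.00000051)) * (1 + 0.000001) * (1 + 2 * 0.14065) := by
          refine prod3_le ?_ (by linarith [hSB3a]) (by linarith [hSB3b])
            (by positivity) (by linarith [hSB3a0]) (by linarith [hSB3b0])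
          rw [mul_assoc]; nlinarith [hb3]
      _ ≤ 0.0000059 := by norm_num
  have hB4 : epsB4 α y ≤ 0.00000042 := by
    unfold epsB4
    rw [show -π * α * (8 * y - 2 / y) = -(π * α * (8 * y - 2 / y)) by ring]
    calc y ^ 4 * Real.exp (-(π * α * (8 * y - 2 / y))) *
          (1 + ∑' n : ℕ, Real.exp (-8 * π * α * y * (((n : ℝ) + 2) ^ 2 - 1))) *
          (1 + 2 * ∑' n : ℕ, ((n : ℝ) + 1) ^ 4 / y ^ 4 *
            Real.exp (-2 * π * ((n : ℝ) + 1) ^ 2 * α / y))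
        ≤ (9 / 16 * 0.00000051) * (1 + 0.000001) * (1 + 2 * 0.22604) := by
          exact prod3_le hb3 (by linarith [hSB4a]) (by linarith [hSB4b])
            (by positivity) (by linarith [hSB4a0]) (by linarith [hSB4b0])
      _ ≤ 0.00000042 := by norm_num
  have hepsB : epsB α y < 0.006 := by
    unfold epsB
    linarith [hB1, hB2, hB3, hB4]
  exact ⟨hepsA, hepsB⟩
end
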